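/- arXiv:1003.1553 — 3 statements merged into one kernel-verified Lean document; each statement's English description precedes it below -/
import Mathlib

section
/- For every integer k ≥ 2 and every positive integer i, the sum of the lattice points in the dilate iΔ_k of Δ_k = conv{(0,0),(0,1),(1,1),(k,0)} equals (i/12)·(2(k²+k+1)i² + 3(k²+k+2)i + k²+k+4, 2(k+2)i² + 12i + 8 − 2k). -/
open MeasureTheory Pointwise

/-- The Delzant polygon of the (k-1)-st Hirzebruch surface. -/
noncomputable def deltaK (k : ℤ) : Set (ℝ × ℝ) :=
  convexHull ℝ ({(0, 0), (0, 1), (1, 1), ((k : ℝ), 0)} : Set (ℝ × ℝ))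

/-- The lattice points of a subset of `ℝ × ℝ`. -/
def latPts (S : Set (ℝ × ℝ)) : Set (ℤ × ℤ) :=
  {p | ((p.1 : ℝ), (p.2 : ℝ)) ∈ S}

/-- The sum of the lattice points contained in a subset of `ℝ × ℝ`. -/
noncomputable def latSum (S : Set (ℝ × ℝ)) : ℝ × ℝ :=
  ∑ᶠ p ∈ latPts S, (((p.1 : ℝ), (p.2 : ℝ)) : ℝ × ℝ)

section Aux

lemma aux_IccZ_succ (n : ℕ) :
    Finset.Icc (0:ℤ) ((n:ℤ)+1) = insert ((n:ℤ)+1) (Finset.Icc (0:ℤ) n) := by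
  ext a; simp only [Finset.mem_Icc, Finset.mem_insert]; omega

lemma aux_sumIccN (n : ℕ) :
    ∑ a ∈ Finset.Icc (0:ℤ) (n:ℤ), (a:ℝ) = n*(n+1)/2 := by
  induction n with
  | zero => norm_num
  | succ m ih =>
      push_cast
      rw [aux_IccZ_succ, Finset.sum_insert (by simp), ih]; push_cast; ring

lemma aux_sumIccSqN (n : ℕ) :
    ∑ a ∈ Finset.Icc (0:ℤ) (n:ℤ), ((a:ℝ))^2 = n*(n+1)*(2*n+1)/6 := by
  induction n with
  | zero => norm_num
  | succ m ih =>
      push_cast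
      rw [aux_IccZ_succ, Finset.sum_insert (by simp), ih]; push_cast; ring

lemma aux_cardIccN (n : ℕ) : (((Finset.Icc (0:ℤ) (n:ℤ)).card : ℝ)) = n+1 := by
  rw [Int.card_Icc]; simp

lemma aux_sumIcc (N : ℤ) (hN : 0 ≤ N) :
    ∑ a ∈ Finset.Icc (0:ℤ) N, (a:ℝ) = N*(N+1)/2 := by
  have h := aux_sumIccN N.toNat
  rw [Int.toNat_of_nonneg hN] at h
  have hc : ((N.toNat : ℕ) : ℝ) = (N:ℝ) := by
    exact_mod_cast congrArg (Int.cast : ℤ→ℝ) (Int.toNat_of_nonneg hN)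
  rw [h, hc]

lemma aux_cardIcc (N : ℤ) (hN : 0 ≤ N) : ((Finset.Icc (0:ℤ) N).card : ℝ) = N+1 := by
  have h := aux_cardIccN N.toNat
  rw [Int.toNat_of_nonneg hN] at h
  have hc : ((N.toNat : ℕ) : ℝ) = (N:ℝ) := by
    exact_mod_cast congrArg (Int.cast : ℤ→ℝ) (Int.toNat_of_nonneg hN)
  rw [h, hc]

lemma aux_sum_quad (n : ℕ) (c2 c1 c0 : ℝ) :
    ∑ b ∈ Finset.Icc (0:ℤ) (n:ℤ), (c2*(b:ℝ)^2 + c1*(b:ℝ) + c0)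
      = c2*((n:ℝ)*(n+1)*(2*n+1)/6) + c1*((n:ℝ)*(n+1)/2) + c0*((n:ℝ)+1) := by
  rw [Finset.sum_add_distrib, Finset.sum_add_distrib, ← Finset.mul_sum, ← Finset.mul_sum,
    aux_sumIccSqN, aux_sumIccN, Finset.sum_const, nsmul_eq_mul, aux_cardIccN]
  ring

lemma aux_sum_mk (s : Finset ℤ) (f g : ℤ → ℝ) :
    ∑ x ∈ s, (f x, g x) = (∑ x ∈ s, f x, ∑ x ∈ s, g x) := by
  classical
  induction s using Finset.induction with
  | empty => simp [Prod.ext_iff]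
  | insert _ _ h ih => simp [Finset.sum_insert h, ih, Prod.ext_iff]

lemma deltaK_eq (k : ℤ) (hk : 2 ≤ k) :
    deltaK k = {p : ℝ × ℝ | 0 ≤ p.1 ∧ 0 ≤ p.2 ∧ p.2 ≤ 1 ∧ p.1 + ((k:ℝ)-1)*p.2 ≤ k} := by
  have hk1 : (1:ℝ) ≤ (k:ℝ) := by exact_mod_cast by linarith
  set S : Set (ℝ × ℝ) := ({(0, 0), (0, 1), (1, 1), ((k : ℝ), 0)} : Set (ℝ × ℝ)) with hS
  apply le_antisymm
  · apply convexHull_min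
    · rintro p (rfl|rfl|rfl|rfl) <;> simp only [Set.mem_setOf_eq] <;>
        refine ⟨by norm_num <;> linarith, by norm_num <;> linarith,
          by norm_num <;> linarith, by norm_num <;> linarith⟩
    · rintro p hp q hq a b ha hb hab
      obtain ⟨hp1, hp2, hp3, hp4⟩ := hp
      obtain ⟨hq1, hq2, hq3, hq4⟩ := hq
      refine ⟨?_, ?_, ?_, ?_⟩ <;>
        simp only [Prod.fst_add, Prod.snd_add, Prod.smul_fst, Prod.smul_snd, smul_eq_mul] <;>
        nlinarith
  · rintro ⟨x, y⟩ ⟨h1, h2, h3, h4⟩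
    simp only [Set.mem_setOf_eq] at h1 h2 h3 h4
    set R : ℝ := (k:ℝ) - ((k:ℝ)-1)*y with hR
    have hRpos : 0 < R := by nlinarith
    set t : ℝ := x / R with ht
    have ht0 : 0 ≤ t := div_nonneg h1 hRpos.le
    have ht1 : t ≤ 1 := by rw [ht, div_le_one hRpos]; linarith
    have htR : t * R = x := div_mul_cancel₀ x hRpos.ne'
    have m00 : ((0:ℝ),(0:ℝ)) ∈ S := by left; rfl
    have m01 : ((0:ℝ),(1:ℝ)) ∈ S := by right; left; rfl
    have m11 : ((1:ℝ),(1:ℝ)) ∈ S := by right; right; left; rfl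
    have mk0 : (((k:ℝ)),(0:ℝ)) ∈ S := by right; right; right; rfl
    have segA : ((0:ℝ), y) ∈ segment ℝ ((0:ℝ),(0:ℝ)) ((0:ℝ),(1:ℝ)) := by
      refine ⟨1-y, y, by linarith, h2, by ring, ?_⟩
      simp [Prod.ext_iff, Prod.smul_mk]
    have segB : (R, y) ∈ segment ℝ (((k:ℝ)),(0:ℝ)) ((1:ℝ),(1:ℝ)) := by
      refine ⟨1-y, y, by linarith, h2, by ring, ?_⟩
      simp only [Prod.smul_mk, Prod.mk_add_mk, Prod.mk.injEq, smul_eq_mul]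
      exact ⟨by rw [hR]; ring, by ring⟩
    have hA : ((0:ℝ), y) ∈ deltaK k :=
      (convex_convexHull ℝ S).segment_subset (subset_convexHull ℝ S m00)
        (subset_convexHull ℝ S m01) segA
    have hB : (R, y) ∈ deltaK k :=
      (convex_convexHull ℝ S).segment_subset (subset_convexHull ℝ S mk0)
        (subset_convexHull ℝ S m11) segB
    have segP : ((x:ℝ), y) ∈ segment ℝ ((0:ℝ), y) (R, y) := by
      refine ⟨1-t, t, by linarith, ht0, by ring, ?_⟩
      simp only [Prod.smul_mk, Prod.mk_add_mk, Prod.mk.injEq, smul_eq_mul]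
      constructor
      · rw [mul_zero, zero_add]; exact htR
      · ring
    exact (convex_convexHull ℝ S).segment_subset hA hB segP

end Aux

theorem latSum_dilate_deltaK (k : ℤ) (hk : 2 ≤ k) (i : ℕ) (hi : 1 ≤ i) :
    latSum ((i : ℝ) • deltaK k) =
      ((i : ℝ) / 12) •
        ((2 * ((k : ℝ) ^ 2 + k + 1) * (i : ℝ) ^ 2 + 3 * ((k : ℝ) ^ 2 + k + 2) * (i : ℝ)
            + (k : ℝ) ^ 2 + k + 4,
          2 * ((k : ℝ) + 2) * (i : ℝ) ^ 2 + 12 * (i : ℝ) + 8 - 2 * (k : ℝ)) : ℝ × ℝ) := by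
  classical
  have hi0 : (0:ℝ) < (i:ℝ) := by exact_mod_cast Nat.pos_of_ne_zero (by omega)
  have hk1 : (1:ℝ) ≤ (k:ℝ) := by exact_mod_cast by linarith
  have hII : (i:ℝ) * (i:ℝ)⁻¹ = 1 := mul_inv_cancel₀ hi0.ne'
  have hIinv : (0:ℝ) ≤ (i:ℝ)⁻¹ := inv_nonneg.mpr hi0.le
  set F : Finset (ℤ×ℤ) := (Finset.Icc (0:ℤ) (i:ℤ)).biUnion
    (fun b => (Finset.Icc (0:ℤ) ((i:ℤ)*k - (k-1)*b)).image (fun a => (a, b))) with hF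
  have hmemF : ∀ a b : ℤ, ((a,b) ∈ F ↔
      (0 ≤ b ∧ b ≤ (i:ℤ)) ∧ (0 ≤ a ∧ a ≤ (i:ℤ)*k - (k-1)*b)) := by
    intro a b
    simp only [hF, Finset.mem_biUnion, Finset.mem_image, Finset.mem_Icc, Prod.mk.injEq]
    constructor
    · rintro ⟨b', hb', a', ha', rfl, rfl⟩
      exact ⟨hb', ha'⟩
    · rintro ⟨hb, ha⟩
      exact ⟨b, hb, a, ha, rfl, rfl⟩
  have hset : latPts ((i:ℝ) • deltaK k) = ↑F := by
    ext ⟨a,b⟩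
    rw [latPts, Set.mem_setOf_eq, Set.mem_smul_set_iff_inv_smul_mem₀ hi0.ne',
      deltaK_eq k hk, Set.mem_setOf_eq]
    simp only [Prod.smul_mk, smul_eq_mul]
    rw [Finset.mem_coe, hmemF]
    constructor
    · rintro ⟨c1, c2, c3, c4⟩
      have hcancel : ∀ x:ℝ, (i:ℝ)*((i:ℝ)⁻¹*x) = x := fun x => by field_simp
      have ha : (0:ℝ) ≤ (a:ℝ) := by
        have := mul_nonneg hi0.le c1; rwa [hcancel] at this
      have hb : (0:ℝ) ≤ (b:ℝ) := by
        have := mul_nonneg hi0.le c2; rwa [hcancel] at this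
      have hbi : (b:ℝ) ≤ (i:ℝ) := by
        have := mul_le_mul_of_nonneg_left c3 hi0.le; rwa [hcancel, mul_one] at this
      have hax : (a:ℝ) ≤ (i:ℝ)*(k:ℝ) - ((k:ℝ)-1)*(b:ℝ) := by
        have h4 := mul_le_mul_of_nonneg_left c4 hi0.le
        rw [mul_add, hcancel, mul_left_comm, hcancel] at h4
        linarith
      refine ⟨⟨by exact_mod_cast hb, by exact_mod_cast hbi⟩,
        ⟨by exact_mod_cast ha, ?_⟩⟩
      have : (a:ℝ) ≤ (((i:ℤ)*k - (k-1)*b : ℤ) : ℝ) := by push_cast; linarith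
      exact_mod_cast this
    · rintro ⟨⟨hb0, hbi⟩, ha0, haN⟩
      have hb0' : (0:ℝ) ≤ (b:ℝ) := by exact_mod_cast hb0
      have hbi' : (b:ℝ) ≤ (i:ℝ) := by exact_mod_cast hbi
      have ha0' : (0:ℝ) ≤ (a:ℝ) := by exact_mod_cast ha0
      have haN' : (a:ℝ) ≤ (i:ℝ)*(k:ℝ) - ((k:ℝ)-1)*(b:ℝ) := by
        have : ((a:ℤ):ℝ) ≤ (((i:ℤ)*k - (k-1)*b : ℤ) : ℝ) := by exact_mod_cast haN
        push_cast at this; linarith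
      refine ⟨mul_nonneg hIinv ha0', mul_nonneg hIinv hb0', ?_, ?_⟩
      · nlinarith [mul_le_mul_of_nonneg_left hbi' hIinv]
      · nlinarith [mul_le_mul_of_nonneg_left
          (by linarith : (a:ℝ) + ((k:ℝ)-1)*(b:ℝ) ≤ (i:ℝ)*(k:ℝ)) hIinv]
  have hdisj : (↑(Finset.Icc (0:ℤ) (i:ℤ)) : Set ℤ).PairwiseDisjoint
      (fun b => (Finset.Icc (0:ℤ) ((i:ℤ)*k - (k-1)*b)).image (fun a => (a, b))) := by
    intro b1 _ b2 _ hne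
    simp only [Function.onFun, Finset.disjoint_left, Finset.mem_image]
    rintro p ⟨a1, _, rfl⟩ ⟨a2, _, h⟩
    injection h with h1 h2
    exact hne h2.symm
  rw [latSum, hset, finsum_mem_coe_finset, hF, Finset.sum_biUnion hdisj]
  have hinner : ∀ b ∈ Finset.Icc (0:ℤ) (i:ℤ),
      (∑ p ∈ (Finset.Icc (0:ℤ) ((i:ℤ)*k - (k-1)*b)).image (fun a => (a, b)),
        (((p.1:ℝ)), ((p.2:ℝ))))
      = (((k:ℝ)-1)^2/2*(b:ℝ)^2 + (-(((k:ℝ)-1)*(2*(i:ℝ)*(k:ℝ)+1)/2))*(b:ℝ)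
            + (i:ℝ)*(k:ℝ)*((i:ℝ)*(k:ℝ)+1)/2,
          (-((k:ℝ)-1))*(b:ℝ)^2 + ((i:ℝ)*(k:ℝ)+1)*(b:ℝ) + 0) := by
    intro b hb
    rw [Finset.mem_Icc] at hb
    have hN0 : 0 ≤ (i:ℤ)*k - (k-1)*b := by
      nlinarith [mul_le_mul_of_nonneg_left hb.2 (by linarith : (0:ℤ) ≤ k-1)]
    rw [Finset.sum_image (fun x _ y _ h => congrArg Prod.fst h)]
    have hred : ∀ x : ℤ, ((((x,b).1 : ℤ):ℝ), (((x,b).2 : ℤ):ℝ)) = ((x:ℝ), (b:ℝ)) :=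
      fun x => rfl
    simp only [hred]
    rw [aux_sum_mk, aux_sumIcc _ hN0, Finset.sum_const, nsmul_eq_mul, aux_cardIcc _ hN0]
    refine Prod.ext ?_ ?_ <;> simp only <;> push_cast <;> ring
  rw [Finset.sum_congr rfl hinner, aux_sum_mk, aux_sum_quad, aux_sum_quad]
  refine Prod.ext ?_ ?_ <;> simp only [Prod.smul_mk, smul_eq_mul] <;> ring
end

section
/- Let G be a torus (ℂ^×)ⁿ acting linearly on a finite-dimensional complex vector space V, with weight decomposition V = ⊕_{χ} V_χ. A nonzero vector v ∈ V is G-semistable (i.e., the closure of the orbit G·v does not contain 0) if and only if the weight polytope Wt_G(v), the convex hull in ℝⁿ of the characters χ with v_χ ≠ 0, contains the origin. -/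
open Finset

lemma log_char (n : ℕ) (t : Fin n → ℂˣ) (e : Fin n → ℤ) :
    Real.log (‖∏ m, ((t m : ℂ) ^ (e m))‖) =
      ∑ m, (e m : ℝ) * Real.log (‖(t m : ℂ)‖) := by
  rw [norm_prod, Real.log_prod]
  · exact Finset.sum_congr rfl fun m _ => by rw [norm_zpow, Real.log_zpow]
  · intro m _
    simp [zpow_ne_zero, (t m).ne_zero]

lemma notin_closure_of_weights {n : ℕ} {ι : Type} [Fintype ι] (w : ι → Fin n → ℤ) (v : ι → ℂ)
    {κ : Type} (A : Finset κ) (φ : κ → ι) (c : κ → ℝ)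
    (hφ : ∀ i ∈ A, v (φ i) ≠ 0) (hc0 : ∀ i ∈ A, 0 ≤ c i) (hc1 : ∑ i ∈ A, c i = 1)
    (hw : ∀ m, ∑ i ∈ A, c i * (w (φ i) m : ℝ) = 0) :
    (0 : ι → ℂ) ∉
        closure {u : ι → ℂ | ∃ t : Fin n → ℂˣ,
          u = fun j => (∏ m, ((t m : ℂ) ^ (w j m))) * v j} := by
  set L : ℝ := ∑ i ∈ A, c i * Real.log (‖v (φ i)‖) with hL
  intro h
  rw [Metric.mem_closure_iff] at h
  obtain ⟨u, ⟨t, rfl⟩, hd⟩ := h (Real.exp L) (Real.exp_pos L)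
  rw [dist_zero_left] at hd
  -- each coordinate is small
  have hsmall : ∀ i ∈ A,
      ‖(∏ m, ((t m : ℂ) ^ (w (φ i) m))) * v (φ i)‖ < Real.exp L := by
    intro i _
    calc ‖(∏ m, ((t m : ℂ) ^ (w (φ i) m))) * v (φ i)‖
        ≤ _ := norm_le_pi_norm (fun j => (∏ m, ((t m : ℂ) ^ (w j m))) * v j) (φ i)
      _ < Real.exp L := hd
  have hpos : ∀ i ∈ A, 0 < ‖(∏ m, ((t m : ℂ) ^ (w (φ i) m))) * v (φ i)‖ := by
    intro i hi
    apply norm_pos_iff.2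
    exact mul_ne_zero (Finset.prod_ne_zero_iff.2 fun m _ => zpow_ne_zero _ (t m).ne_zero)
      (hφ i hi)
  -- the weighted sum of logs equals L
  have key : ∑ i ∈ A, c i * Real.log
      (‖(∏ m, ((t m : ℂ) ^ (w (φ i) m))) * v (φ i)‖) = L := by
    have : ∀ i ∈ A, c i * Real.log
        (‖(∏ m, ((t m : ℂ) ^ (w (φ i) m))) * v (φ i)‖)
        = (∑ m, c i * ((w (φ i) m : ℝ) * Real.log (‖(t m : ℂ)‖)))
          + c i * Real.log (‖v (φ i)‖) := by
      intro i hi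
      rw [norm_mul, Real.log_mul (norm_ne_zero_iff.2
          (Finset.prod_ne_zero_iff.2 fun m _ => zpow_ne_zero _ (t m).ne_zero))
        (norm_ne_zero_iff.2 (hφ i hi)), mul_add, log_char, Finset.mul_sum]
    rw [Finset.sum_congr rfl this, Finset.sum_add_distrib, hL]
    have : ∑ i ∈ A, ∑ m, c i * ((w (φ i) m : ℝ) * Real.log (‖(t m : ℂ)‖)) = 0 := by
      rw [Finset.sum_comm]
      refine Finset.sum_eq_zero fun m _ => ?_
      have := hw m
      calc ∑ i ∈ A, c i * ((w (φ i) m : ℝ) * Real.log (‖(t m : ℂ)‖))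
          = (∑ i ∈ A, c i * (w (φ i) m : ℝ)) * Real.log (‖(t m : ℂ)‖) := by
            rw [Finset.sum_mul]; exact Finset.sum_congr rfl fun i _ => by ring
        _ = 0 := by rw [this, zero_mul]
    rw [this, zero_add]
  -- but the strict inequality gives a contradiction
  obtain ⟨i0, hi0, hci0⟩ : ∃ i ∈ A, 0 < c i := by
    by_contra hcon
    push_neg at hcon
    have : ∑ i ∈ A, c i = 0 :=
      Finset.sum_eq_zero fun i hi => le_antisymm (hcon i hi) (hc0 i hi)
    rw [hc1] at this; norm_num at this
  have hlt : ∑ i ∈ A, c i * Real.log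
      (‖(∏ m, ((t m : ℂ) ^ (w (φ i) m))) * v (φ i)‖) < ∑ i ∈ A, c i * L := by
    refine Finset.sum_lt_sum (fun i hi => ?_) ⟨i0, hi0, ?_⟩
    · refine mul_le_mul_of_nonneg_left ?_ (hc0 i hi)
      have := Real.log_lt_log (hpos i hi) (hsmall i hi)
      rw [Real.log_exp] at this
      exact this.le
    · refine mul_lt_mul_of_pos_left ?_ hci0
      have := Real.log_lt_log (hpos i0 hi0) (hsmall i0 hi0)
      rwa [Real.log_exp] at this
  rw [key, ← Finset.sum_mul, hc1, one_mul] at hlt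
  exact lt_irrefl L hlt

lemma zpow_sum' {G : Type*} [CommGroup G] {α : Type*} (a : G) (f : α → ℤ) (s : Finset α) :
    a ^ (∑ i ∈ s, f i) = ∏ i ∈ s, a ^ f i := by
  classical
  induction s using Finset.induction with
  | empty => simp
  | insert _ _ h ih => rw [Finset.sum_insert h, Finset.prod_insert h, zpow_add, ih]

lemma mem_closure_aux {n : ℕ} {ι : Type} [Fintype ι] (w : ι → Fin n → ℤ) (v : ι → ℂ)
    (l : Fin n → ℤ) (hl : ∀ j, v j ≠ 0 → 0 < ∑ m, l m * w j m) :
    (0 : ι → ℂ) ∈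
        closure {u : ι → ℂ | ∃ t : Fin n → ℂˣ,
          u = fun j => (∏ m, ((t m : ℂ) ^ (w j m))) * v j} := by
  set s : ℕ → ℝ := fun k => 1 / (k + 1) with hs
  have hspos : ∀ k, 0 < s k := fun k => by positivity
  have hsle : ∀ k, s k ≤ 1 := fun k => by
    rw [hs]; dsimp only
    rw [div_le_one (by positivity)]
    linarith [Nat.cast_nonneg (α := ℝ) k]
  set τ : ℕ → ℂˣ := fun k => Units.mk0 ((s k : ℝ) : ℂ)
    (by exact_mod_cast (hspos k).ne') with hτ
  set tk : ℕ → Fin n → ℂˣ := fun k m => τ k ^ l m with htk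
  refine mem_closure_of_tendsto (b := Filter.atTop) (f := fun k : ℕ => fun j =>
    (∏ m, ((tk k m : ℂ) ^ (w j m))) * v j) ?_ (Filter.Eventually.of_forall fun k => ⟨tk k, rfl⟩)
  rw [tendsto_pi_nhds]
  intro j
  by_cases hvj : v j = 0
  · simpa [hvj] using tendsto_const_nhds
  · -- simplify the product
    have hprod : ∀ k, (∏ m, ((tk k m : ℂ) ^ (w j m))) * v j
        = ((τ k ^ (∑ m, l m * w j m) : ℂˣ) : ℂ) * v j := by
      intro k
      congr 1
      calc ∏ m, ((tk k m : ℂ) ^ (w j m))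
          = ∏ m, (((tk k m ^ (w j m) : ℂˣ)) : ℂ) := by
            exact Finset.prod_congr rfl fun m _ =>
              (Units.val_zpow_eq_zpow_val (tk k m) (w j m)).symm
        _ = ((∏ m, tk k m ^ (w j m) : ℂˣ) : ℂ) := by
            exact (map_prod (Units.coeHom ℂ) (fun m => tk k m ^ w j m) Finset.univ).symm
        _ = ((τ k ^ (∑ m, l m * w j m) : ℂˣ) : ℂ) := by
            congr 1
            rw [htk]
            simp only [← zpow_mul]
            exact (zpow_sum' (τ k) (fun m => l m * w j m) Finset.univ).symm
    simp only [hprod]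
    -- squeeze
    have he := hl j hvj
    set e : ℤ := ∑ m, l m * w j m with hee
    have hnorm : ∀ k, ‖((τ k ^ e : ℂˣ) : ℂ) * v j‖ ≤ s k * ‖v j‖ := by
      intro k
      rw [norm_mul, Units.val_zpow_eq_zpow_val]
      have : ((τ k : ℂ)) = ((s k : ℝ) : ℂ) := rfl
      rw [this]
      have he' : e = (e.toNat : ℤ) := (Int.toNat_of_nonneg he.le).symm
      rw [he', zpow_natCast, norm_pow, Complex.norm_real,
        Real.norm_of_nonneg (hspos k).le]
      have h1 : 1 ≤ e.toNat := by omega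
      have : s k ^ e.toNat ≤ s k ^ 1 :=
        pow_le_pow_of_le_one (hspos k).le (hsle k) h1
      rw [pow_one] at this
      exact mul_le_mul_of_nonneg_right this (norm_nonneg _)
    have hb : Filter.Tendsto (fun k : ℕ => s k * ‖v j‖) Filter.atTop (nhds 0) := by
      have := tendsto_one_div_add_atTop_nhds_zero_nat (𝕜 := ℝ)
      simpa [hs] using this.mul_const ‖v j‖
    exact squeeze_zero_norm hnorm hb

lemma exists_int_sep {n : ℕ} {ι : Type} [Fintype ι] (w : ι → Fin n → ℤ) (v : ι → ℂ)
    (h : (0 : Fin n → ℝ) ∉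
      convexHull ℝ {x : Fin n → ℝ | ∃ j, v j ≠ 0 ∧ x = fun m => ((w j m : ℝ))}) :
    ∃ l : Fin n → ℤ, ∀ j, v j ≠ 0 → 0 < ∑ m, l m * w j m := by
  classical
  set S : Set (Fin n → ℝ) := {x | ∃ j, v j ≠ 0 ∧ x = fun m => ((w j m : ℝ))} with hS
  have hfin : S.Finite := Set.Finite.subset (Set.finite_range fun j => fun m => ((w j m : ℝ)))
    (by rintro x ⟨j, _, rfl⟩; exact ⟨j, rfl⟩)
  obtain ⟨f, u, hfu, hu0⟩ := geometric_hahn_banach_closed_point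
    (convex_convexHull ℝ S) (hfin.isClosed_convexHull (𝕜 := ℝ)) h
  rw [map_zero] at hu0
  -- λ coordinates
  set lam : Fin n → ℝ := fun m => -f (fun m' => if m = m' then 1 else 0) with hlam
  have hfx : ∀ x : Fin n → ℝ, -f x = ∑ m, x m * lam m := by
    intro x
    conv_lhs => rw [pi_eq_sum_univ x]
    rw [map_sum, neg_eq_iff_eq_neg, ← Finset.sum_neg_distrib]
    exact Finset.sum_congr rfl fun m _ => by
      rw [map_smul, smul_eq_mul, hlam]; ring
  have hsep : ∀ j, v j ≠ 0 → (-u) < ∑ m, (w j m : ℝ) * lam m := by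
    intro j hj
    have hmem : (fun m => ((w j m : ℝ))) ∈ convexHull ℝ S :=
      subset_convexHull ℝ S ⟨j, hj, rfl⟩
    have := hfu _ hmem
    rw [← hfx]
    linarith
  have hupos : 0 < -u := by linarith
  -- rational approximation
  set C : ℝ := 1 + ∑ j : ι, ∑ m, |(w j m : ℝ)| with hC
  have hCpos : 0 < C := by
    have : (0:ℝ) ≤ ∑ j : ι, ∑ m, |(w j m : ℝ)| :=
      Finset.sum_nonneg fun j _ => Finset.sum_nonneg fun m _ => abs_nonneg _
    linarith
  set ε : ℝ := (-u) / (2 * C) with hε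
  have hεpos : 0 < ε := by positivity
  have hq : ∀ m : Fin n, ∃ q : ℚ, |lam m - q| < ε := fun m => exists_rat_near (lam m) hεpos
  choose q hq using hq
  -- bound: for j with v j ≠ 0, ∑ q m * w j m > 0 (rational)
  have hqpos : ∀ j, v j ≠ 0 → (0 : ℚ) < ∑ m, q m * (w j m) := by
    intro j hj
    have h1 : ∑ m, (w j m : ℝ) * lam m - ∑ m, ((q m : ℝ)) * (w j m : ℝ)
        ≤ ε * C := by
      rw [← Finset.sum_sub_distrib]
      calc ∑ m, ((w j m : ℝ) * lam m - (q m : ℝ) * (w j m : ℝ))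
          ≤ ∑ m, ε * |(w j m : ℝ)| := by
            refine Finset.sum_le_sum fun m _ => ?_
            have : (w j m : ℝ) * lam m - (q m : ℝ) * (w j m : ℝ)
                = (lam m - q m) * (w j m : ℝ) := by ring
            rw [this]
            calc (lam m - (q m : ℝ)) * (w j m : ℝ) ≤ |(lam m - (q m : ℝ)) * (w j m : ℝ)| :=
                  le_abs_self _
              _ = |lam m - (q m : ℝ)| * |(w j m : ℝ)| := abs_mul _ _
              _ ≤ ε * |(w j m : ℝ)| :=
                  mul_le_mul_of_nonneg_right (hq m).le (abs_nonneg _)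
        _ = ε * ∑ m, |(w j m : ℝ)| := by rw [Finset.mul_sum]
        _ ≤ ε * C := by
            refine mul_le_mul_of_nonneg_left ?_ hεpos.le
            rw [hC]
            have : ∑ m, |(w j m : ℝ)| ≤ ∑ j' : ι, ∑ m, |(w j' m : ℝ)| :=
              Finset.single_le_sum (f := fun j' => ∑ m, |(w j' m : ℝ)|)
                (fun j' _ => Finset.sum_nonneg fun m _ => abs_nonneg _) (Finset.mem_univ j)
            linarith
    have hεC : ε * C = (-u) / 2 := by
      rw [hε]; field_simp
    have h2 : (0:ℝ) < ∑ m, ((q m : ℝ)) * (w j m : ℝ) := by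
      have := hsep j hj
      rw [hεC] at h1
      linarith
    have : ((∑ m, q m * (w j m) : ℚ) : ℝ) = ∑ m, ((q m : ℝ)) * (w j m : ℝ) := by
      push_cast; ring
    exact_mod_cast this ▸ h2
  -- clear denominators
  set d : ℕ := ∏ m, (q m).den with hd
  have hdpos : 0 < d := Finset.prod_pos fun m _ => (q m).pos
  refine ⟨fun m => (q m).num * ((d / (q m).den : ℕ) : ℤ), fun j hj => ?_⟩
  have hcast : ∀ m : Fin n, (((q m).num * ((d / (q m).den : ℕ) : ℤ) : ℤ) : ℚ)
      = q m * d := by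
    intro m
    have hdvd : (q m).den ∣ d := Finset.dvd_prod_of_mem _ (Finset.mem_univ m)
    push_cast [Nat.cast_div hdvd (Nat.cast_ne_zero.mpr (q m).pos.ne' : ((q m).den : ℚ) ≠ 0)]
    conv_rhs => rw [← Rat.num_div_den (q m)]
    rw [div_mul_eq_mul_div, mul_div_assoc]
    congr 1
    rw [Int.cast_div_charZero (by exact_mod_cast hdvd : ((q m).den : ℤ) ∣ (d : ℤ))]
    push_cast
    ring
  have : (0:ℚ) < ∑ m, (((q m).num * ((d / (q m).den : ℕ) : ℤ) : ℤ) : ℚ) * (w j m) := by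
    calc (0:ℚ) < (d : ℚ) * ∑ m, q m * (w j m) := by
          have := hqpos j hj
          positivity
      _ = ∑ m, (((q m).num * ((d / (q m).den : ℕ) : ℤ) : ℤ) : ℚ) * (w j m) := by
          rw [Finset.mul_sum]
          exact Finset.sum_congr rfl fun m _ => by rw [hcast m]; ring
  exact_mod_cast this

/-- For a linear action of the torus `(ℂ^×)ⁿ` on a finite-dimensional vector space,
written in a basis of weight vectors (indexed by a finite type `ι`, with weights
`w : ι → ℤⁿ`, a point `t` of the torus acting on the `j`-th coordinate by the character
`t ↦ ∏ m, t_m ^ (w j m)`), a nonzero vector `v` is semistable (the origin is not in the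
closure of its orbit) iff the weight polytope, the convex hull of the weights `w j` with
`v j ≠ 0`, contains the origin. -/
theorem torus_semistable_iff_zero_mem_weight_polytope
    (n : ℕ) (ι : Type) [Fintype ι] (w : ι → Fin n → ℤ) (v : ι → ℂ) (hv : v ≠ 0) :
    ((0 : ι → ℂ) ∉
        closure {u : ι → ℂ | ∃ t : Fin n → ℂˣ,
          u = fun j => (∏ m, ((t m : ℂ) ^ (w j m))) * v j}) ↔
      (0 : Fin n → ℝ) ∈
        convexHull ℝ {x : Fin n → ℝ | ∃ j, v j ≠ 0 ∧ x = fun m => ((w j m : ℝ))} := by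
  classical
  constructor
  · intro hcl
    by_contra hnot
    obtain ⟨l, hl⟩ := exists_int_sep w v hnot
    exact hcl (mem_closure_aux w v l hl)
  · intro hhull
    rw [_root_.convexHull_eq] at hhull
    obtain ⟨κ, A, c, z, hc0, hc1, hz, hcm⟩ := hhull
    have hne : ∃ j, v j ≠ 0 := by
      by_contra hcon
      push_neg at hcon
      exact hv (funext hcon)
    obtain ⟨j0, hj0⟩ := hne
    set φ : κ → ι := fun i =>
      if h : ∃ j, v j ≠ 0 ∧ z i = fun m => ((w j m : ℝ)) then h.choose else j0 with hφdef
    have hφ : ∀ i ∈ A, v (φ i) ≠ 0 ∧ z i = fun m => ((w (φ i) m : ℝ)) := by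
      intro i hi
      have h : ∃ j, v j ≠ 0 ∧ z i = fun m => ((w j m : ℝ)) := hz i hi
      rw [hφdef]
      dsimp only
      rw [dif_pos h]
      exact h.choose_spec
    have hcm' : ∑ i ∈ A, c i • z i = 0 := by
      rwa [Finset.centerMass_eq_of_sum_1 _ _ hc1] at hcm
    refine notin_closure_of_weights w v A φ c (fun i hi => (hφ i hi).1) hc0 hc1 fun m => ?_
    have h0 := congrFun hcm' m
    rw [Finset.sum_apply] at h0
    simp only [Pi.zero_apply] at h0
    rw [← h0]
    refine Finset.sum_congr rfl fun i hi => ?_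
    rw [Pi.smul_apply, smul_eq_mul, (hφ i hi).2]
end

section
/- For Δ₂ = conv{(0,0),(0,1),(1,1),(2,0)} ⊂ ℝ² (the polytope of the one-point blow-up of ℙ²), the obstruction vectors F_{Δ₂,1} and F_{Δ₂,2} are both equal to (1/12)·(1, −2); in particular they are nonzero and span the line ℂ·(1,−2) ⊂ ℂ². -/
open MeasureTheory Pointwise

/-- The Delzant polygon of the one-point blow-up of the projective plane. -/
noncomputable def delta2 : Set (ℝ × ℝ) :=
  convexHull ℝ ({(0, 0), (0, 1), (1, 1), (2, 0)} : Set (ℝ × ℝ))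

/-- Halfspace description of `delta2`. -/
lemma delta2_eq_desc :
    delta2 = {p : ℝ × ℝ | 0 ≤ p.1 ∧ 0 ≤ p.2 ∧ p.2 ≤ 1 ∧ p.1 + p.2 ≤ 2} := by
  apply le_antisymm
  · apply convexHull_min
    · rintro p hp
      simp only [Set.mem_insert_iff, Set.mem_singleton_iff] at hp
      rcases hp with h | h | h | h <;> subst h <;> norm_num
    · have h1 : Convex ℝ {p : ℝ × ℝ | 0 ≤ p.1} :=
        convex_halfSpace_ge (LinearMap.fst ℝ ℝ ℝ).isLinear 0
      have h2 : Convex ℝ {p : ℝ × ℝ | 0 ≤ p.2} :=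
        convex_halfSpace_ge (LinearMap.snd ℝ ℝ ℝ).isLinear 0
      have h3 : Convex ℝ {p : ℝ × ℝ | p.2 ≤ 1} :=
        convex_halfSpace_le (LinearMap.snd ℝ ℝ ℝ).isLinear 1
      have h4 : Convex ℝ {p : ℝ × ℝ | p.1 + p.2 ≤ 2} :=
        convex_halfSpace_le (LinearMap.fst ℝ ℝ ℝ + LinearMap.snd ℝ ℝ ℝ).isLinear 2
      have heq : {p : ℝ × ℝ | 0 ≤ p.1 ∧ 0 ≤ p.2 ∧ p.2 ≤ 1 ∧ p.1 + p.2 ≤ 2} =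
          ({p : ℝ × ℝ | 0 ≤ p.1} ∩ {p | 0 ≤ p.2} ∩ {p | p.2 ≤ 1} ∩
            {p | p.1 + p.2 ≤ 2}) := by
        ext p; simp only [Set.mem_setOf_eq, Set.mem_inter_iff]; tauto
      rw [heq]
      exact ((h1.inter h2).inter h3).inter h4
  · rintro ⟨x, y⟩ ⟨hx, hy, hy1, hxy⟩
    simp only at hx hy hy1 hxy
    set b : ℝ := max (x + 2*y - 2) 0 with hb
    have hb0 : 0 ≤ b := le_max_right _ _
    have hbx : b ≤ x := max_le (by linarith) hx
    have hby : b ≤ y := max_le (by linarith) hy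
    have hbl : x + 2*y - 2 ≤ b := le_max_left _ _
    have key : ((x, y) : ℝ × ℝ) =
        ∑ i : Fin 4, (![1 - y - (x-b)/2, y - b, b, (x-b)/2] i) •
          (![((0:ℝ),(0:ℝ)), (0,1), (1,1), (2,0)] i) := by
      simp only [Fin.sum_univ_four, Prod.ext_iff]
      norm_num [Prod.ext_iff]
      simp only [Matrix.cons_val_two, Matrix.cons_val_three, Matrix.tail_cons, Matrix.head_cons]
      constructor <;> ring
    rw [key]
    apply (convex_convexHull ℝ _).sum_mem
    · intro i _
      fin_cases i <;> simp <;> linarith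
    · simp [Fin.sum_univ_four]; ring
    · intro i _
      apply subset_convexHull
      fin_cases i <;> simp

/-- Description of the dilates of `delta2`. -/
lemma smul_delta2 (c : ℝ) (hc : 0 < c) :
    c • delta2 = {p : ℝ × ℝ | 0 ≤ p.1 ∧ 0 ≤ p.2 ∧ p.2 ≤ c ∧ p.1 + p.2 ≤ 2*c} := by
  rw [delta2_eq_desc]
  ext p
  rw [Set.mem_smul_set_iff_inv_smul_mem₀ hc.ne']
  simp only [Set.mem_setOf_eq, Prod.smul_fst, Prod.smul_snd, smul_eq_mul]
  constructor
  · rintro ⟨h1, h2, h3, h4⟩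
    have h1' := mul_le_mul_of_nonneg_left h1 hc.le
    have h2' := mul_le_mul_of_nonneg_left h2 hc.le
    have h3' := mul_le_mul_of_nonneg_left h3 hc.le
    have h4' := mul_le_mul_of_nonneg_left h4 hc.le
    rw [mul_zero] at *
    have hcc : c * c⁻¹ = 1 := mul_inv_cancel₀ hc.ne'
    refine ⟨by nlinarith, by nlinarith, by nlinarith, by nlinarith⟩
  · rintro ⟨h1, h2, h3, h4⟩
    have hci : 0 ≤ c⁻¹ := (inv_pos.mpr hc).le
    have hcc : c⁻¹ * c = 1 := inv_mul_cancel₀ hc.ne'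
    refine ⟨mul_nonneg hci h1, mul_nonneg hci h2, by nlinarith, by nlinarith⟩

lemma latPts_smul (c : ℝ) (hc : 0 < c) :
    latPts (c • delta2) =
      {q : ℤ × ℤ | 0 ≤ q.1 ∧ 0 ≤ q.2 ∧ (q.2 : ℝ) ≤ c ∧ (q.1 : ℝ) + q.2 ≤ 2*c} := by
  rw [smul_delta2 c hc]
  ext q
  simp only [latPts, Set.mem_setOf_eq]
  constructor <;>
    (rintro ⟨h1, h2, h3, h4⟩;
     exact ⟨by exact_mod_cast h1, by exact_mod_cast h2, h3, h4⟩)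

lemma latPts_int (n : ℤ) (hn : 0 < n) :
    latPts ((n : ℝ) • delta2) =
      ((((Finset.Icc (0:ℤ) (2*n) ×ˢ Finset.Icc (0:ℤ) n).filter
        (fun q => q.1 + q.2 ≤ 2*n)) : Finset (ℤ × ℤ)) : Set (ℤ × ℤ)) := by
  rw [latPts_smul (n : ℝ) (by exact_mod_cast hn)]
  ext q
  simp only [Set.mem_setOf_eq, Finset.coe_filter, Finset.mem_product, Finset.mem_Icc]
  constructor
  · rintro ⟨h1, h2, h3, h4⟩
    have h3' : q.2 ≤ n := by exact_mod_cast h3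
    have h4' : q.1 + q.2 ≤ 2*n := by exact_mod_cast h4
    exact ⟨⟨⟨h1, by omega⟩, h2, h3'⟩, h4'⟩
  · rintro ⟨⟨⟨h1, _⟩, h2, h3⟩, h4⟩
    exact ⟨h1, h2, by exact_mod_cast h3, by exact_mod_cast h4⟩

lemma sum_pair_eq (s : Finset (ℤ × ℤ)) (A B : ℤ) (hA : ∑ p ∈ s, p.1 = A)
    (hB : ∑ p ∈ s, p.2 = B) :
    (∑ p ∈ s, (((p.1 : ℝ), (p.2 : ℝ)) : ℝ × ℝ)) = ((A : ℝ), (B : ℝ)) := by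
  apply Prod.ext
  · rw [Prod.fst_sum]
    simp only
    rw [← Int.cast_sum, hA]
  · rw [Prod.snd_sum]
    simp only
    rw [← Int.cast_sum, hB]

lemma ncard_one : (latPts ((1:ℝ) • delta2)).ncard = 5 := by
  rw [show ((1:ℝ)) = ((1:ℤ):ℝ) by norm_num, latPts_int 1 one_pos, Set.ncard_coe_finset]
  decide

lemma ncard_two : (latPts ((2:ℝ) • delta2)).ncard = 12 := by
  rw [show ((2:ℝ)) = ((2:ℤ):ℝ) by norm_num, latPts_int 2 two_pos, Set.ncard_coe_finset]
  decide

lemma ncard_three : (latPts ((3:ℝ) • delta2)).ncard = 22 := by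
  rw [show ((3:ℝ)) = ((3:ℤ):ℝ) by norm_num, latPts_int 3 three_pos, Set.ncard_coe_finset]
  decide

lemma latSum_one : latSum ((1:ℝ) • delta2) = (4, 2) := by
  rw [latSum, show ((1:ℝ)) = ((1:ℤ):ℝ) by norm_num, latPts_int 1 one_pos,
    finsum_mem_coe_finset, sum_pair_eq _ 4 2 (by decide) (by decide)]
  norm_num

lemma latSum_two : latSum ((2:ℝ) • delta2) = (19, 10) := by
  rw [latSum, show ((2:ℝ)) = ((2:ℤ):ℝ) by norm_num, latPts_int 2 two_pos,
    finsum_mem_coe_finset, sum_pair_eq _ 19 10 (by decide) (by decide)]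
  norm_num

lemma latSum_three : latSum ((3:ℝ) • delta2) = (52, 28) := by
  rw [latSum, show ((3:ℝ)) = ((3:ℤ):ℝ) by norm_num, latPts_int 3 three_pos,
    finsum_mem_coe_finset, sum_pair_eq _ 52 28 (by decide) (by decide)]
  norm_num

/-- The obstruction vectors `F_{Δ₂,1}` and `F_{Δ₂,2}` of the one-point blow-up of `ℙ²`
both equal `(1/12) • (1, -2)`; in particular they are nonzero, and they span the line
`ℝ • (1,-2)`. -/
theorem obstruction_delta2
    (E₀ E₁ : ℝ)
    (hE : ∀ i : ℕ, 1 ≤ i →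
      (volume delta2).toReal * (i : ℝ) ^ 2 + E₁ * (i : ℝ) + E₀ =
        ((latPts ((i : ℝ) • delta2)).ncard : ℝ))
    (s₁ s₂ : ℝ × ℝ)
    (hs : ∀ i : ℕ, 1 ≤ i →
      (i : ℝ) ^ 3 • (∫ x in delta2, x) + (i : ℝ) ^ 2 • s₂ + (i : ℝ) • s₁ =
        latSum ((i : ℝ) • delta2)) :
    (volume delta2).toReal • s₁ - E₀ • (∫ x in delta2, x) =
        ((1 : ℝ) / 12) • ((1, -2) : ℝ × ℝ) ∧
      (volume delta2).toReal • s₂ - E₁ • (∫ x in delta2, x) =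
        ((1 : ℝ) / 12) • ((1, -2) : ℝ × ℝ) ∧
      (volume delta2).toReal • s₁ - E₀ • (∫ x in delta2, x) ≠ 0 ∧
      Submodule.span ℝ
          ({(volume delta2).toReal • s₁ - E₀ • (∫ x in delta2, x),
            (volume delta2).toReal • s₂ - E₁ • (∫ x in delta2, x)} : Set (ℝ × ℝ)) =
        Submodule.span ℝ ({((1, -2) : ℝ × ℝ)} : Set (ℝ × ℝ)) := by
  set V : ℝ := (volume delta2).toReal with hVdef
  set M : ℝ × ℝ := ∫ x in delta2, x with hMdef
  -- Ehrhart equations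
  have e1 : V + E₁ + E₀ = 5 := by
    have h := hE 1 le_rfl
    rw [Nat.cast_one] at h
    rw [ncard_one] at h
    push_cast at h
    linarith
  have e2 : V * 4 + E₁ * 2 + E₀ = 12 := by
    have h := hE 2 one_le_two
    rw [Nat.cast_ofNat] at h
    rw [ncard_two] at h
    push_cast at h
    linarith
  have e3 : V * 9 + E₁ * 3 + E₀ = 22 := by
    have h := hE 3 (by norm_num)
    rw [Nat.cast_ofNat] at h
    rw [ncard_three] at h
    push_cast at h
    linarith
  have hV : V = 3/2 := by linarith
  have hE1 : E₁ = 5/2 := by linarith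
  have hE0 : E₀ = 1 := by linarith
  -- lattice sum equations
  have m1 : M + s₂ + s₁ = (4, 2) := by
    have h := hs 1 le_rfl
    rw [Nat.cast_one, latSum_one] at h
    simpa using h
  have m2 : (8:ℝ) • M + (4:ℝ) • s₂ + (2:ℝ) • s₁ = (19, 10) := by
    have h := hs 2 one_le_two
    rw [Nat.cast_ofNat, latSum_two] at h
    norm_num at h
    convert h using 2 <;> norm_num
  have m3 : (27:ℝ) • M + (9:ℝ) • s₂ + (3:ℝ) • s₁ = (52, 28) := by
    have h := hs 3 (by norm_num)
    rw [Nat.cast_ofNat, latSum_three] at h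
    norm_num at h
    convert h using 2 <;> norm_num
  -- componentwise scalar equations
  have c1a : M.1 + s₂.1 + s₁.1 = 4 := by
    have := congrArg Prod.fst m1; simpa using this
  have c1b : M.2 + s₂.2 + s₁.2 = 2 := by
    have := congrArg Prod.snd m1; simpa using this
  have c2a : 8 * M.1 + 4 * s₂.1 + 2 * s₁.1 = 19 := by
    have := congrArg Prod.fst m2; simpa [Prod.smul_fst] using this
  have c2b : 8 * M.2 + 4 * s₂.2 + 2 * s₁.2 = 10 := by
    have := congrArg Prod.snd m2; simpa [Prod.smul_snd] using this
  have c3a : 27 * M.1 + 9 * s₂.1 + 3 * s₁.1 = 52 := by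
    have := congrArg Prod.fst m3; simpa [Prod.smul_fst] using this
  have c3b : 27 * M.2 + 9 * s₂.2 + 3 * s₁.2 = 28 := by
    have := congrArg Prod.snd m3; simpa [Prod.smul_snd] using this
  have hM1 : M.1 = 7/6 := by linarith
  have hM2 : M.2 = 2/3 := by linarith
  have hs11 : s₁.1 = 5/6 := by linarith
  have hs12 : s₁.2 = 1/3 := by linarith
  have hs21 : s₂.1 = 2 := by linarith
  have hs22 : s₂.2 = 1 := by linarith
  have hF1 : V • s₁ - E₀ • M = ((1 : ℝ) / 12) • ((1, -2) : ℝ × ℝ) := by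
    apply Prod.ext
    · simp only [Prod.fst_sub, Prod.smul_fst, smul_eq_mul, hV, hE0, hs11, hM1]
      norm_num
    · simp only [Prod.snd_sub, Prod.smul_snd, smul_eq_mul, hV, hE0, hs12, hM2]
      norm_num
  have hF2 : V • s₂ - E₁ • M = ((1 : ℝ) / 12) • ((1, -2) : ℝ × ℝ) := by
    apply Prod.ext
    · simp only [Prod.fst_sub, Prod.smul_fst, smul_eq_mul, hV, hE1, hs21, hM1]
      norm_num
    · simp only [Prod.snd_sub, Prod.smul_snd, smul_eq_mul, hV, hE1, hs22, hM2]
      norm_num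
  refine ⟨hF1, hF2, ?_, ?_⟩
  · rw [hF1]
    intro h
    have h1 := congrArg Prod.fst h
    simp only [Prod.smul_fst, smul_eq_mul, Prod.fst_zero] at h1
    norm_num at h1
  · rw [hF1, hF2, Set.pair_eq_singleton]
    exact Submodule.span_singleton_smul_eq (isUnit_iff_ne_zero.2 (by norm_num)) _
end
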